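/- For every τ in the closed standard fundamental domain F = {z ∈ ℍ : |z| ≥ 1, −1/2 ≤ Re z ≤ 1/2}, one has |χ*(τ)| ≤ e^{2π Im τ} + 82999. -/

import Mathlib

open Complex

noncomputable section

/-- `sigma' k n = ∑_{d ∣ n} d^k`, the sum of the k-th powers of the positive divisors of n. -/
def sigma' (k n : ℕ) : ℕ := ∑ d ∈ n.divisors, d ^ k

/-- `qpar τ = e^{2πiτ}`. -/
def qpar (τ : ℂ) : ℂ := Complex.exp (2 * Real.pi * Complex.I * τ)

/-- The quasimodular Eisenstein series `E₂(τ) = 1 - 24 ∑_{n≥1} σ₁(n) qⁿ`. -/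
def E2 (τ : ℂ) : ℂ := 1 - 24 * ∑' n : ℕ, (sigma' 1 (n + 1) : ℂ) * qpar τ ^ (n + 1)

/-- The Eisenstein series `E₄(τ) = 1 + 240 ∑_{n≥1} σ₃(n) qⁿ`. -/
def E4 (τ : ℂ) : ℂ := 1 + 240 * ∑' n : ℕ, (sigma' 3 (n + 1) : ℂ) * qpar τ ^ (n + 1)

/-- The Eisenstein series `E₆(τ) = 1 - 504 ∑_{n≥1} σ₅(n) qⁿ`. -/
def E6 (τ : ℂ) : ℂ := 1 - 504 * ∑' n : ℕ, (sigma' 5 (n + 1) : ℂ) * qpar τ ^ (n + 1)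

/-- The modular discriminant `Δ = (E₄³ - E₆²)/1728`. -/
def Δ' (τ : ℂ) : ℂ := (E4 τ ^ 3 - E6 τ ^ 2) / 1728

/-- The modular j-invariant `j = E₄³/Δ`. -/
def jinv (τ : ℂ) : ℂ := E4 τ ^ 3 / Δ' τ

/-- `χ = E₂E₄E₆/Δ`. -/
def χ' (τ : ℂ) : ℂ := E2 τ * E4 τ * E6 τ / Δ' τ

/-- `ξ = E₄E₆/Δ`. -/
def ξ' (τ : ℂ) : ℂ := E4 τ * E6 τ / Δ' τ

/-- The almost holomorphic modular function `χ*(τ) = χ(τ) - (3/(π Im τ)) ξ(τ)`. -/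
def χstar (τ : ℂ) : ℂ := χ' τ - (3 / (Real.pi * τ.im) : ℝ) * ξ' τ

/-- `τ` lies in the upper half-plane and satisfies `aτ² + bτ + c = 0` where
`a > 0` and `gcd(a,b,c) = 1`. -/
def QuadPoint (τ : ℂ) (a b c : ℤ) : Prop :=
  0 < τ.im ∧ 0 < a ∧ Int.gcd (Int.gcd a b) c = 1 ∧
    (a : ℂ) * τ ^ 2 + (b : ℂ) * τ + (c : ℂ) = 0

/-- `τ` is a quadratic point of the upper half-plane. -/
def IsQuadratic (τ : ℂ) : Prop := ∃ a b c : ℤ, QuadPoint τ a b c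

/-- `τ` is a quadratic point of discriminant `D = b² - 4ac`. -/
def HasDisc (τ : ℂ) (D : ℤ) : Prop :=
  ∃ a b c : ℤ, QuadPoint τ a b c ∧ D = b ^ 2 - 4 * a * c

/-- Membership in the closed standard fundamental domain
`F = {z ∈ ℍ : |z| ≥ 1, -1/2 ≤ Re z ≤ 1/2}`. -/
def inF (τ : ℂ) : Prop :=
  0 < τ.im ∧ 1 ≤ ‖τ‖ ∧ -(1 / 2) ≤ τ.re ∧ τ.re ≤ 1 / 2

/-- `τ` and `τ'` lie in the same `SL₂(ℤ)`-orbit under Möbius transformations. -/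
def MoebiusEquiv (τ τ' : ℂ) : Prop :=
  ∃ γ : Matrix.SpecialLinearGroup (Fin 2) ℤ,
    τ' = ((γ.1 0 0 : ℂ) * τ + (γ.1 0 1 : ℂ)) / ((γ.1 1 0 : ℂ) * τ + (γ.1 1 1 : ℂ))


set_option maxHeartbeats 2000000


lemma sigma'_one (k : ℕ) : sigma' k 1 = 1 := by simp [sigma', Nat.divisors_one]

lemma sigma'_mono (k l m : ℕ) (h : k ≤ l) : sigma' k m ≤ sigma' l m := by
  apply Finset.sum_le_sum
  intro d hd
  exact Nat.pow_le_pow_right (Nat.pos_of_mem_divisors hd) h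

/-- key divisor bound: `2^(k+1) σ_k(m) ≤ 2^(k+1) m^k + m^(k+1)` -/
lemma sigma'_bound (k m : ℕ) (hm : m ≠ 0) :
    2^(k+1) * sigma' k m ≤ 2^(k+1) * m^k + m^(k+1) := by
  have hmem : m ∈ m.divisors := Nat.mem_divisors_self m hm
  have hsplit : sigma' k m = m^k + ∑ d ∈ m.divisors.erase m, d^k := by
    rw [sigma', ← Finset.add_sum_erase m.divisors (fun d => d^k) hmem]
  -- each proper divisor d satisfies 2*d ≤ m
  have hd2 : ∀ d ∈ m.divisors.erase m, 2 * d ≤ m := by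
    intro d hd
    have hne : d ≠ m := (Finset.mem_erase.mp hd).1
    have hdvd : d ∣ m := (Nat.mem_divisors.mp (Finset.mem_erase.mp hd).2).1
    obtain ⟨e, he⟩ := hdvd
    have hd0 : d ≠ 0 := by rintro rfl; simp at he; exact hm he
    have he2 : 2 ≤ e := by
      rcases Nat.lt_or_ge e 2 with h | h
      · interval_cases e <;> simp_all
      · exact h
    calc 2 * d ≤ e * d := Nat.mul_le_mul_right d he2
      _ = m := by rw [he, Nat.mul_comm]
  -- bound each term: 2^(k+1) * d^k ≤ 2 * m^k
  have hterm : ∀ d ∈ m.divisors.erase m, 2^(k+1) * d^k ≤ 2 * m^k := by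
    intro d hd
    have := hd2 d hd
    calc 2^(k+1) * d^k = 2 * ((2*d)^k) := by ring
      _ ≤ 2 * m^k := Nat.mul_le_mul_left 2 (Nat.pow_le_pow_left this k)
  -- card of proper divisors ≤ m/2
  have hcard : (m.divisors.erase m).card ≤ m / 2 := by
    have hsub : m.divisors.erase m ⊆ Finset.Icc 1 (m/2) := by
      intro d hd
      have h1 : 1 ≤ d := Nat.pos_of_mem_divisors (Finset.mem_erase.mp hd).2
      have h2 : d ≤ m / 2 := Nat.le_div_iff_mul_le (by norm_num) |>.mpr (by
        have := hd2 d hd; omega)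
      exact Finset.mem_Icc.mpr ⟨h1, h2⟩
    calc (m.divisors.erase m).card ≤ (Finset.Icc 1 (m/2)).card := Finset.card_le_card hsub
      _ = m / 2 := by rw [Nat.card_Icc]; omega
  calc 2^(k+1) * sigma' k m = 2^(k+1) * m^k + ∑ d ∈ m.divisors.erase m, 2^(k+1) * d^k := by
        rw [hsplit]; rw [Nat.mul_add, Finset.mul_sum]
    _ ≤ 2^(k+1) * m^k + (m.divisors.erase m).card * (2 * m^k) := by
        gcongr; exact Finset.sum_le_card_nsmul _ _ _ hterm
    _ ≤ 2^(k+1) * m^k + (m/2) * (2 * m^k) := by gcongr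
    _ ≤ 2^(k+1) * m^k + m^(k+1) := by
        have : (m/2) * 2 ≤ m := Nat.div_mul_le_self m 2
        have h2 : (m/2) * (2 * m^k) ≤ m * m^k := by
          rw [← Nat.mul_assoc]; exact Nat.mul_le_mul_right _ this
        have h3 : m * m^k = m^(k+1) := by ring
        omega


lemma arith_step (a b m : ℕ) (hab : 2*a ≤ b) :
    ∀ k, 2^k * a^k ≤ b^k := by
  intro k
  calc 2^k * a^k = (2*a)^k := (mul_pow 2 a k).symm
    _ ≤ b^k := Nat.pow_le_pow_left hab k

lemma geom1 : ∀ n : ℕ, sigma' 1 (n+1) ≤ 25^n := by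
  intro n
  match n with
  | 0 => simp [sigma'_one]
  | Nat.succ m =>
    show sigma' 1 (m+2) ≤ 25^(m+1)
    have h := sigma'_bound 1 (m+2) (by omega)
    have hgoal : ∀ j, 4*(j+2)^1 + (j+2)^2 ≤ 4 * 25^(j+1) := by
      intro j
      induction j with
      | zero => norm_num
      | succ i ih =>
        have e : 2*(i+3) ≤ 3*(i+2) := by omega
        have ha := arith_step (i+3) (3*(i+2)) i e 1
        have hb := arith_step (i+3) (3*(i+2)) i e 2
        rw [mul_pow] at ha hb
        norm_num at ha hb
        have h1 : 4*(i+3)^1 + (i+3)^2 ≤ 25 * (4*(i+2)^1 + (i+2)^2) := by nlinarith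
        calc 4*(i+3)^1 + (i+3)^2 ≤ 25 * (4*(i+2)^1 + (i+2)^2) := h1
          _ ≤ 25 * (4 * 25^(i+1)) := Nat.mul_le_mul_left 25 ih
          _ = 4 * 25^(i+2) := by ring
    have hg := hgoal m
    have h4 : (2:ℕ)^(1+1) = 4 := by norm_num
    rw [h4] at h
    have : 4 * sigma' 1 (m+2) ≤ 4 * 25^(m+1) := le_trans h hg
    omega

lemma geom3 : ∀ n : ℕ, sigma' 3 (n+2) ≤ 9 * 25^n := by
  intro n
  have h := sigma'_bound 3 (n+2) (by omega)
  have hgoal : ∀ j, 16*(j+2)^3 + (j+2)^4 ≤ 16 * (9 * 25^j) := by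
    intro j
    induction j with
    | zero => norm_num
    | succ i ih =>
      have e : 2*(i+3) ≤ 3*(i+2) := by omega
      have ha := arith_step (i+3) (3*(i+2)) i e 3
      have hb := arith_step (i+3) (3*(i+2)) i e 4
      rw [mul_pow] at ha hb
      norm_num at ha hb
      have h1 : 16*(i+3)^3 + (i+3)^4 ≤ 25 * (16*(i+2)^3 + (i+2)^4) := by nlinarith
      calc 16*(i+1+2)^3 + (i+1+2)^4 = 16*(i+3)^3 + (i+3)^4 := by ring_nf
        _ ≤ 25 * (16*(i+2)^3 + (i+2)^4) := h1
        _ ≤ 25 * (16 * (9 * 25^i)) := Nat.mul_le_mul_left 25 ih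
        _ = 16 * (9 * 25^(i+1)) := by ring
  have hg := hgoal n
  norm_num at h hg ⊢
  omega

lemma geom5 : ∀ n : ℕ, sigma' 5 (n+2) ≤ 33 * 25^n := by
  intro n
  have h := sigma'_bound 5 (n+2) (by omega)
  have hgoal : ∀ j, 64*(j+2)^5 + (j+2)^6 ≤ 64 * (33 * 25^j) := by
    intro j
    induction j with
    | zero => norm_num
    | succ i ih =>
      have e : 2*(i+3) ≤ 3*(i+2) := by omega
      have ha := arith_step (i+3) (3*(i+2)) i e 5
      have hb := arith_step (i+3) (3*(i+2)) i e 6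
      rw [mul_pow] at ha hb
      norm_num at ha hb
      have h1' : 64*(64*(i+3)^5 + (i+3)^6) ≤ 64*(25 * (64*(i+2)^5 + (i+2)^6)) := by
        nlinarith [Nat.zero_le ((i+2)^5), Nat.zero_le ((i+2)^6)]
      have h1 : 64*(i+3)^5 + (i+3)^6 ≤ 25 * (64*(i+2)^5 + (i+2)^6) :=
        Nat.le_of_mul_le_mul_left h1' (by norm_num)
      calc 64*(i+1+2)^5 + (i+1+2)^6 = 64*(i+3)^5 + (i+3)^6 := by ring_nf
        _ ≤ 25 * (64*(i+2)^5 + (i+2)^6) := h1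
        _ ≤ 25 * (64 * (33 * 25^i)) := Nat.mul_le_mul_left 25 ih
        _ = 64 * (33 * 25^(i+1)) := by ring
  have hg := hgoal n
  norm_num at h hg ⊢
  omega

/-- workhorse: geometric domination gives summability -/
lemma summable_of_geom (f : ℕ → ℂ) (C : ℝ)
    (h : ∀ n, ‖(f n)‖ ≤ C * (1/8)^n) : Summable f := by
  apply Summable.of_norm_bounded (g := fun n => C * (1/8:ℝ)^n)
  · exact (summable_geometric_of_lt_one (by norm_num) (by norm_num)).mul_left C
  · intro n; simpa using h n

/-- workhorse: geometric domination gives tsum bound -/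
lemma abs_tsum_le_of_geom (f : ℕ → ℂ) (C : ℝ)
    (h : ∀ n, ‖(f n)‖ ≤ C * (1/8)^n) :
    ‖(∑' n, f n)‖ ≤ 8/7 * C := by
  have hgeom : Summable (fun n : ℕ => (1/8:ℝ)^n) :=
    summable_geometric_of_lt_one (by norm_num) (by norm_num)
  have hg : Summable (fun n : ℕ => C * (1/8:ℝ)^n) := hgeom.mul_left C
  have hnorm : Summable (fun n => ‖f n‖) := by
    apply Summable.of_nonneg_of_le (fun n => norm_nonneg _) _ hg
    intro n; simpa using h n
  calc ‖(∑' n, f n)‖ = ‖∑' n, f n‖ := rfl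
    _ ≤ ∑' n, ‖f n‖ := norm_tsum_le_tsum_norm hnorm
    _ ≤ ∑' n : ℕ, C * (1/8:ℝ)^n := by
        apply Summable.tsum_le_tsum _ hnorm hg
        intro n; simpa using h n
    _ = C * (1-1/8:ℝ)⁻¹ := by rw [tsum_mul_left, tsum_geometric_of_lt_one (by norm_num) (by norm_num)]
    _ = 8/7 * C := by ring

def SS (k : ℕ) (q : ℂ) : ℂ := ∑' n : ℕ, (sigma' k (n+1) : ℂ) * q^(n+1)
def TT (k : ℕ) (q : ℂ) : ℂ := ∑' n : ℕ, (sigma' k (n+2) : ℂ) * q^(n+1)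

section est
variable (q : ℂ) (hr : ‖q‖ ≤ 1/200)

lemma term_bound (hr : ‖q‖ ≤ 1/200) (c : ℕ → ℕ) (A : ℝ)
    (hc : ∀ n, (c n : ℝ) ≤ A * 25^n) :
    ∀ n, ‖((c n : ℂ) * q^(n+1))‖ ≤ (A * ‖q‖) * (1/8)^n := by
  intro n
  have h0 : (0:ℝ) ≤ ‖q‖ := norm_nonneg q
  have hA : (0:ℝ) ≤ A := by
    have := (Nat.cast_nonneg (c 0) : (0:ℝ) ≤ c 0).trans (by simpa using hc 0)
    linarith
  have h1 : ‖((c n : ℂ) * q^(n+1))‖ = (c n : ℝ) * ‖q‖ ^ (n+1) := by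
    rw [norm_mul, norm_pow, Complex.norm_natCast]
  rw [h1, pow_succ]
  have h2 : ‖q‖ ^ n ≤ (1/200:ℝ)^n := pow_le_pow_left₀ h0 hr n
  have h3 : (25:ℝ)^n * (1/200)^n = (1/8)^n := by rw [← mul_pow]; norm_num
  calc (c n : ℝ) * (‖q‖ ^ n * ‖q‖)
      ≤ (A * 25^n) * ((1/200:ℝ)^n * ‖q‖) := by
        apply mul_le_mul (hc n) _ (by positivity) (by positivity)
        exact mul_le_mul_of_nonneg_right h2 h0
    _ = (A * ‖q‖) * ((25:ℝ)^n * (1/200)^n) := by ring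
    _ = (A * ‖q‖) * (1/8)^n := by rw [h3]

lemma geom3' : ∀ n : ℕ, ((sigma' 3 (n+1) : ℕ) : ℝ) ≤ 9 * 25^n := by
  intro n
  match n with
  | 0 => rw [sigma'_one]; norm_num
  | Nat.succ m =>
    have := geom3 m
    have h2 : ((sigma' 3 (m+2) : ℕ) : ℝ) ≤ 9 * 25^m := by exact_mod_cast this
    calc ((sigma' 3 (m+1+1) : ℕ) : ℝ) ≤ 9 * 25^m := h2
      _ ≤ 9 * 25^(m+1) := by
          have : (25:ℝ)^m ≤ 25^(m+1) := pow_le_pow_right₀ (by norm_num) (by omega)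
          linarith

lemma geom5' : ∀ n : ℕ, ((sigma' 5 (n+1) : ℕ) : ℝ) ≤ 33 * 25^n := by
  intro n
  match n with
  | 0 => rw [sigma'_one]; norm_num
  | Nat.succ m =>
    have := geom5 m
    have h2 : ((sigma' 5 (m+2) : ℕ) : ℝ) ≤ 33 * 25^m := by exact_mod_cast this
    calc ((sigma' 5 (m+1+1) : ℕ) : ℝ) ≤ 33 * 25^m := h2
      _ ≤ 33 * 25^(m+1) := by
          have : (25:ℝ)^m ≤ 25^(m+1) := pow_le_pow_right₀ (by norm_num) (by omega)
          linarith

lemma geom1' : ∀ n : ℕ, ((sigma' 1 (n+1) : ℕ) : ℝ) ≤ 1 * 25^n := by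
  intro n; have := geom1 n
  have h2 : ((sigma' 1 (n+1) : ℕ) : ℝ) ≤ 25^n := by exact_mod_cast this
  linarith

lemma summable_SS (k : ℕ) (A : ℝ) (hA : ∀ n, ((sigma' k (n+1) : ℕ) : ℝ) ≤ A * 25^n)
    (hr : ‖q‖ ≤ 1/200) :
    Summable (fun n : ℕ => (sigma' k (n+1) : ℂ) * q^(n+1)) :=
  summable_of_geom _ (A * ‖q‖) (term_bound q hr _ A hA)

lemma SS_eq (k : ℕ) (A : ℝ) (hA : ∀ n, ((sigma' k (n+1) : ℕ) : ℝ) ≤ A * 25^n)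
    (hr : ‖q‖ ≤ 1/200) :
    SS k q = q * (1 + TT k q) := by
  have hs := summable_SS q k A hA hr
  have h0 : SS k q = (sigma' k 1 : ℂ) * q^1 + ∑' n : ℕ, (sigma' k (n+1+1) : ℂ) * q^(n+1+1) := by
    rw [SS]; exact Summable.tsum_eq_zero_add hs
  rw [h0, sigma'_one]
  have h1 : ∑' n : ℕ, (sigma' k (n+1+1) : ℂ) * q^(n+1+1)
      = ∑' n : ℕ, q * ((sigma' k (n+2) : ℂ) * q^(n+1)) := by
    apply tsum_congr; intro n; ring
  rw [h1, tsum_mul_left]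
  rw [TT]; push_cast; ring

lemma abs_TT3 (hr : ‖q‖ ≤ 1/200) :
    ‖(TT 3 q)‖ ≤ 8/7 * (9 * ‖q‖) := by
  apply abs_tsum_le_of_geom
  apply term_bound q hr _ 9
  intro n
  have := geom3 n
  exact_mod_cast this

lemma abs_TT5 (hr : ‖q‖ ≤ 1/200) :
    ‖(TT 5 q)‖ ≤ 8/7 * (33 * ‖q‖) := by
  apply abs_tsum_le_of_geom
  apply term_bound q hr _ 33
  intro n
  have := geom5 n
  exact_mod_cast this

lemma abs_SS1 (hr : ‖q‖ ≤ 1/200) :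
    ‖(SS 1 q)‖ ≤ 8/7 * (1 * ‖q‖) := by
  apply abs_tsum_le_of_geom
  exact term_bound q hr _ 1 geom1'

lemma abs_TTdiff (hr : ‖q‖ ≤ 1/200) :
    ‖(TT 3 q - TT 5 q)‖ ≤ 8/7 * (33 * ‖q‖) := by
  have hs3 : Summable (fun n : ℕ => (sigma' 3 (n+2) : ℂ) * q^(n+1)) :=
    summable_of_geom _ (9 * ‖q‖) (term_bound q hr _ 9 (fun n => by exact_mod_cast geom3 n))
  have hs5 : Summable (fun n : ℕ => (sigma' 5 (n+2) : ℂ) * q^(n+1)) :=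
    summable_of_geom _ (33 * ‖q‖) (term_bound q hr _ 33 (fun n => by exact_mod_cast geom5 n))
  have hdiff : TT 3 q - TT 5 q
      = ∑' n : ℕ, ((sigma' 3 (n+2) : ℂ) * q^(n+1) - (sigma' 5 (n+2) : ℂ) * q^(n+1)) := by
    rw [TT, TT, ← Summable.tsum_sub hs3 hs5]
  rw [hdiff]
  apply abs_tsum_le_of_geom
  intro n
  have h1 : (sigma' 3 (n+2) : ℂ) * q^(n+1) - (sigma' 5 (n+2) : ℂ) * q^(n+1)
      = (((sigma' 3 (n+2) : ℝ) - (sigma' 5 (n+2) : ℝ) : ℝ) : ℂ) * q^(n+1) := by push_cast; ring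
  rw [h1, norm_mul, norm_pow, Complex.norm_real, Real.norm_eq_abs]
  have h2 : |(sigma' 3 (n+2) : ℝ) - (sigma' 5 (n+2) : ℝ)| ≤ 33 * 25^n := by
    have hm : ((sigma' 3 (n+2) : ℕ) : ℝ) ≤ ((sigma' 5 (n+2) : ℕ) : ℝ) := by
      exact_mod_cast sigma'_mono 3 5 (n+2) (by omega)
    have h3 : ((sigma' 5 (n+2) : ℕ) : ℝ) ≤ 33 * 25^n := by exact_mod_cast geom5 n
    have h4 : (0:ℝ) ≤ (sigma' 3 (n+2) : ℝ) := by positivity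
    rw [abs_sub_comm, _root_.abs_of_nonneg (by linarith)]
    linarith
  have h0 : (0:ℝ) ≤ ‖q‖ := norm_nonneg q
  have h5 : ‖q‖ ^ n ≤ (1/200:ℝ)^n := pow_le_pow_left₀ h0 hr n
  have h6 : (25:ℝ)^n * (1/200)^n = (1/8)^n := by rw [← mul_pow]; norm_num
  calc |(sigma' 3 (n+2) : ℝ) - (sigma' 5 (n+2) : ℝ)| * ‖q‖ ^ (n+1)
      ≤ (33 * 25^n) * ((1/200:ℝ)^n * ‖q‖) := by
        rw [pow_succ]
        apply mul_le_mul h2 _ (by positivity) (by positivity)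
        exact mul_le_mul_of_nonneg_right h5 h0
    _ = (33 * ‖q‖) * ((25:ℝ)^n * (1/200)^n) := by ring
    _ = (33 * ‖q‖) * (1/8)^n := by rw [h6]

end est

lemma chi_aux (q S1 S3 S5 T3 T5 D V W M : ℂ) (t : ℝ) (E2v E4v E6v : ℂ)
    (hqne : q ≠ 0) (hDne : D ≠ 0)
    (hS3 : S3 = q*(1+T3)) (hS5 : S5 = q*(1+T5))
    (e2 : E2v = 1 - 24*S1) (e4 : E4v = 1 + 240*S3) (e6 : E6v = 1 - 504*S5)
    (hV : V = 240*S3 - 504*S5 - 120960*S3*S5)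
    (hW : W = (1 - (t:ℂ))*V - 24*S1*(1+V))
    (hM : M = (1 - (t:ℂ)) + ((1 - (t:ℂ))*(D⁻¹ - 1) + W*D⁻¹)) :
    E2v*E4v*E6v/(q*D) - (t:ℂ)*(E4v*E6v/(q*D)) = M/q := by
  rw [e2, e4, e6, hS3, hS5, hM, hW, hV, hS3, hS5]
  field_simp
  ring

/-- For `τ` in the closed standard fundamental domain, `|χ*(τ)| ≤ e^{2π Im τ} + 82999`. -/
theorem chi_star_upper_bound (τ : ℂ) (hτ : inF τ) :
    ‖(χstar τ)‖ ≤ Real.exp (2 * Real.pi * τ.im) + 82999 := by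
  obtain ⟨him, habs, hre1, hre2⟩ := hτ
  -- Im τ ≥ 0.866
  have habs2 : 1 ≤ ‖τ‖ ^ 2 := by nlinarith [norm_nonneg τ]
  have hsq : ‖τ‖ ^ 2 = τ.re^2 + τ.im^2 := by
    rw [Complex.sq_norm, Complex.normSq_apply]; ring
  have hy2 : (3:ℝ)/4 ≤ τ.im^2 := by nlinarith
  have hy : (0.866:ℝ) ≤ τ.im := by nlinarith
  have hpi : (3.141592:ℝ) ≤ Real.pi := Real.pi_gt_d6.le
  have hpiu : Real.pi ≤ 3.1416 := by linarith [Real.pi_lt_d6]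
  have h2py : (5.44:ℝ) ≤ 2 * Real.pi * τ.im := by nlinarith
  -- exp(2πy) ≥ 200
  have hexp544 : (200:ℝ) ≤ Real.exp 5.44 := by
    have h5 : Real.exp (5.44:ℝ) = Real.exp 5 * Real.exp 0.44 := by
      rw [← Real.exp_add]; norm_num
    have hx : Real.exp 1 ^ 5 = Real.exp 5 := by
      rw [← Real.exp_nat_mul]; norm_num
    have h1 : (2.7182818283:ℝ)^5 ≤ Real.exp 1 ^ 5 :=
      pow_le_pow_left₀ (by norm_num) Real.exp_one_gt_d9.le 5
    have h044 : (1.44:ℝ) ≤ Real.exp 0.44 := by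
      have := Real.add_one_le_exp (0.44:ℝ); linarith
    have h2 : (148.41:ℝ) ≤ Real.exp 5 := by rw [← hx]; nlinarith
    rw [h5]; nlinarith [Real.exp_pos (5:ℝ)]
  have hexp200 : (200:ℝ) ≤ Real.exp (2 * Real.pi * τ.im) :=
    le_trans hexp544 (Real.exp_le_exp.mpr h2py)
  -- the nome
  have hqabs : ‖(qpar τ)‖ = Real.exp (-(2 * Real.pi * τ.im)) := by
    rw [qpar, Complex.norm_exp]
    congr 1
    simp [Complex.mul_re, Complex.mul_im]
  have hrpos : 0 < ‖(qpar τ)‖ := by rw [hqabs]; exact Real.exp_pos _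
  have hqne : qpar τ ≠ 0 := by
    intro h; rw [h] at hrpos; simp at hrpos
  have hr : ‖(qpar τ)‖ ≤ 1/200 := by
    rw [hqabs, Real.exp_neg]
    calc (Real.exp (2*Real.pi*τ.im))⁻¹ ≤ (200:ℝ)⁻¹ := by
          apply inv_anti₀ (by norm_num) hexp200
      _ = 1/200 := by norm_num
  have hrinv : (‖(qpar τ)‖)⁻¹ = Real.exp (2 * Real.pi * τ.im) := by
    rw [hqabs, ← Real.exp_neg]; norm_num
  -- definitional forms
  have e2 : E2 τ = 1 - 24 * SS 1 (qpar τ) := rfl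
  have e4 : E4 τ = 1 + 240 * SS 3 (qpar τ) := rfl
  have e6 : E6 τ = 1 - 504 * SS 5 (qpar τ) := rfl
  -- notation
  set q : ℂ := qpar τ with hq_def
  set r : ℝ := ‖q‖ with hr_def
  set T3 : ℂ := TT 3 q with hT3_def
  set T5 : ℂ := TT 5 q with hT5_def
  set S1 : ℂ := SS 1 q with hS1_def
  set S3 : ℂ := SS 3 q with hS3_def
  set S5 : ℂ := SS 5 q with hS5_def
  have hS3 : S3 = q * (1 + T3) := SS_eq q 3 9 geom3' hr
  have hS5 : S5 = q * (1 + T5) := SS_eq q 5 33 geom5' hr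
  have nr : ∀ z : ℂ, ‖z‖ = ‖z‖ := fun z => rfl
  have c3 : ‖T3‖ ≤ 10.3 * r := by
    rw [nr]; calc ‖T3‖ ≤ 8/7*(9*r) := abs_TT3 q hr
      _ ≤ 10.3 * r := by nlinarith [hrpos.le]
  have c5 : ‖T5‖ ≤ 37.8 * r := by
    rw [nr]; calc ‖T5‖ ≤ 8/7*(33*r) := abs_TT5 q hr
      _ ≤ 37.8 * r := by nlinarith [hrpos.le]
  have cd : ‖T3 - T5‖ ≤ 37.8 * r := by
    rw [nr]; calc ‖(T3-T5)‖ ≤ 8/7*(33*r) := abs_TTdiff q hr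
      _ ≤ 37.8 * r := by nlinarith [hrpos.le]
  have cS1 : ‖S1‖ ≤ 1.2 * r := by
    rw [nr]; calc ‖S1‖ ≤ 8/7*(1*r) := abs_SS1 q hr
      _ ≤ 1.2 * r := by nlinarith [hrpos.le]
  have hrn : ‖q‖ = r := nr q
  clear_value q r T3 T5 S1 S3 S5
  clear hT3_def hT5_def hS1_def hS3_def hS5_def
  have b3 : ‖1 + T3‖ ≤ 1.06 := by
    calc ‖1+T3‖ ≤ ‖(1:ℂ)‖ + ‖T3‖ := norm_add_le _ _
      _ ≤ 1.06 := by rw [norm_one]; linarith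
  have b5 : ‖1 + T5‖ ≤ 1.19 := by
    calc ‖1+T5‖ ≤ ‖(1:ℂ)‖ + ‖T5‖ := norm_add_le _ _
      _ ≤ 1.19 := by rw [norm_one]; linarith
  have b2 : ‖2 + T3 + T5‖ ≤ 2.25 := by
    calc ‖2+T3+T5‖ ≤ ‖(2:ℂ)+T3‖ + ‖T5‖ := norm_add_le _ _
      _ ≤ (‖(2:ℂ)‖ + ‖T3‖) + ‖T5‖ := by linarith [norm_add_le (2:ℂ) T3]
      _ ≤ 2.25 := by
          have h2 : ‖(2:ℂ)‖ = 2 := by norm_num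
          rw [h2]; linarith
  -- G and D
  set G : ℂ := 100*(T3 - T5)*(2 + T3 + T5) - 47*(1+T5)^2 + 8000*q*(1+T3)^3 with hG_def
  set D : ℂ := 1 + 5/12*T3 + 7/12*T5 + q*G with hD_def
  clear_value G D
  have cG : ‖G‖ ≤ 157 := by
    rw [hG_def]
    have p1 : ‖100*(T3-T5)*(2+T3+T5)‖ ≤ 42.6 := by
      rw [norm_mul, norm_mul]
      have h100 : ‖(100:ℂ)‖ = 100 := by norm_num
      rw [h100]
      have hm := mul_le_mul cd b2 (norm_nonneg _) (by positivity : (0:ℝ) ≤ 37.8*r)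
      nlinarith [norm_nonneg (T3-T5), norm_nonneg (2+T3+T5)]
    have p2 : ‖47*(1+T5)^2‖ ≤ 66.6 := by
      rw [norm_mul, norm_pow]
      have h47 : ‖(47:ℂ)‖ = 47 := by norm_num
      rw [h47]
      have hm : ‖1+T5‖^2 ≤ 1.19^2 := pow_le_pow_left₀ (norm_nonneg _) b5 2
      nlinarith
    have p3 : ‖8000*q*(1+T3)^3‖ ≤ 47.7 := by
      rw [norm_mul, norm_mul, norm_pow, hrn]
      have h8000 : ‖(8000:ℂ)‖ = 8000 := by norm_num
      rw [h8000]
      have hm : ‖1+T3‖^3 ≤ 1.06^3 := pow_le_pow_left₀ (norm_nonneg _) b3 3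
      nlinarith [hrpos.le, pow_nonneg (norm_nonneg (1+T3)) 3]
    calc ‖100*(T3-T5)*(2+T3+T5) - 47*(1+T5)^2 + 8000*q*(1+T3)^3‖ ≤ ‖100*(T3-T5)*(2+T3+T5) - 47*(1+T5)^2‖ + ‖8000*q*(1+T3)^3‖ := norm_add_le _ _
      _ ≤ (‖100*(T3-T5)*(2+T3+T5)‖ + ‖47*(1+T5)^2‖) + ‖8000*q*(1+T3)^3‖ := by
          linarith [norm_sub_le (100*(T3-T5)*(2+T3+T5)) (47*(1+T5)^2)]
      _ ≤ 157 := by linarith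
  have cD1 : ‖D - 1‖ ≤ 184 * r := by
    have e : D - 1 = 5/12*T3 + 7/12*T5 + q*G := by rw [hD_def]; ring
    rw [e]
    have h512 : ‖(5/12:ℂ)‖ = 5/12 := by
      rw [show ((5/12:ℂ)) = ((5/12:ℝ):ℂ) by norm_num, Complex.norm_real]; norm_num
    have h712 : ‖(7/12:ℂ)‖ = 7/12 := by
      rw [show ((7/12:ℂ)) = ((7/12:ℝ):ℂ) by norm_num, Complex.norm_real]; norm_num
    have hqG : ‖q*G‖ ≤ r * 157 := by
      rw [norm_mul, hrn]
      exact mul_le_mul_of_nonneg_left cG hrpos.le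
    calc ‖5/12*T3 + 7/12*T5 + q*G‖ ≤ ‖5/12*T3 + 7/12*T5‖ + ‖q*G‖ := norm_add_le _ _
      _ ≤ (‖(5/12:ℂ)*T3‖ + ‖(7/12:ℂ)*T5‖) + ‖q*G‖ := by
          linarith [norm_add_le ((5/12:ℂ)*T3) ((7/12:ℂ)*T5)]
      _ ≤ (5/12*(10.3*r) + 7/12*(37.8*r)) + r*157 := by
          rw [norm_mul, norm_mul, h512, h712]
          have g1 : 5/12*‖T3‖ ≤ 5/12*(10.3*r) := by linarith
          have g2 : 7/12*‖T5‖ ≤ 7/12*(37.8*r) := by linarith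
          linarith
      _ ≤ 184 * r := by linarith [hrpos.le]
  have cD1' : ‖D - 1‖ ≤ 0.92 := by
    calc ‖D-1‖ ≤ 184*r := cD1
      _ ≤ 0.92 := by linarith
  have cD : (0.08:ℝ) ≤ ‖D‖ := by
    have h1 : ‖(1:ℂ)‖ ≤ ‖D‖ + ‖D - 1‖ := by
      calc ‖(1:ℂ)‖ = ‖D - (D-1)‖ := by congr 1; ring
        _ ≤ ‖D‖ + ‖D-1‖ := norm_sub_le _ _
    rw [norm_one] at h1; linarith
  have hDne : D ≠ 0 := by
    intro h; rw [h] at cD; simp at cD; linarith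
  have cDinv : ‖D⁻¹‖ ≤ 12.5 := by
    rw [norm_inv]
    calc ‖D‖⁻¹ ≤ (0.08:ℝ)⁻¹ := by
          apply inv_anti₀ (by norm_num) cD
      _ = 12.5 := by norm_num
  have cR : ‖D⁻¹ - 1‖ ≤ 2300 * r := by
    have e : D⁻¹ - 1 = (1 - D) * D⁻¹ := by field_simp
    rw [e, norm_mul, norm_sub_rev]
    have hm := mul_le_mul cD1 cDinv (norm_nonneg _) (by positivity : (0:ℝ) ≤ 184*r)
    nlinarith [hrpos.le]
  -- numerator pieces
  have cSS3 : ‖S3‖ ≤ 1.06 * r := by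
    rw [hS3, norm_mul, hrn, mul_comm]
    exact mul_le_mul_of_nonneg_right b3 hrpos.le
  have cSS5 : ‖S5‖ ≤ 1.19 * r := by
    rw [hS5, norm_mul, hrn, mul_comm]
    exact mul_le_mul_of_nonneg_right b5 hrpos.le
  set V : ℂ := 240*S3 - 504*S5 - 120960*S3*S5 with hV_def
  clear_value V
  have cV : ‖V‖ ≤ 1618 * r := by
    rw [hV_def]
    have p1 : ‖(240:ℂ)*S3‖ ≤ 240*(1.06*r) := by
      rw [norm_mul]
      have h : ‖(240:ℂ)‖ = 240 := by norm_num
      rw [h]; linarith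
    have p2 : ‖(504:ℂ)*S5‖ ≤ 504*(1.19*r) := by
      rw [norm_mul]
      have h : ‖(504:ℂ)‖ = 504 := by norm_num
      rw [h]; linarith
    have p3 : ‖(120960:ℂ)*S3*S5‖ ≤ 763 * r := by
      rw [norm_mul, norm_mul]
      have h : ‖(120960:ℂ)‖ = 120960 := by norm_num
      rw [h]
      have hs3' : ‖S3‖ ≤ 1.06*(1/200) := by linarith
      have hm := mul_le_mul hs3' cSS5 (norm_nonneg _) (by norm_num : (0:ℝ) ≤ 1.06*(1/200))
      nlinarith [hrpos.le, norm_nonneg S3, norm_nonneg S5]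
    calc ‖240*S3 - 504*S5 - 120960*S3*S5‖ ≤ ‖240*S3 - 504*S5‖ + ‖(120960:ℂ)*S3*S5‖ := norm_sub_le _ _
      _ ≤ (‖(240:ℂ)*S3‖ + ‖(504:ℂ)*S5‖) + ‖(120960:ℂ)*S3*S5‖ := by
          linarith [norm_sub_le ((240:ℂ)*S3) ((504:ℂ)*S5)]
      _ ≤ 1618 * r := by linarith
  have cV' : ‖V‖ ≤ 8.09 := by
    calc ‖V‖ ≤ 1618*r := cV
      _ ≤ 8.09 := by linarith
  -- the real parameter t
  set t : ℝ := 3 / (Real.pi * τ.im) with ht_def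
  have hpipos : (0:ℝ) < Real.pi := by linarith
  have htpos : 0 < t := by rw [ht_def]; positivity
  have ht2 : t ≤ 2 := by
    rw [ht_def, div_le_iff₀ (by positivity)]
    nlinarith
  have c1t : ‖(1:ℂ) - (t:ℂ)‖ ≤ 1 := by
    have e : (1:ℂ) - (t:ℂ) = ((1 - t : ℝ) : ℂ) := by push_cast; ring
    rw [e, Complex.norm_real, Real.norm_eq_abs]
    rw [abs_le]; constructor <;> linarith
  set W : ℂ := (1 - (t:ℂ))*V - 24*S1*(1+V) with hW_def
  clear_value W
  have cW : ‖W‖ ≤ 1881 * r := by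
    rw [hW_def]
    have p1 : ‖(1 - (t:ℂ))*V‖ ≤ 1618*r := by
      rw [norm_mul]
      have hm := mul_le_mul c1t cV (norm_nonneg _) (by norm_num : (0:ℝ) ≤ 1)
      linarith
    have p2 : ‖(24:ℂ)*S1*(1+V)‖ ≤ 24*(1.2*r)*9.09 := by
      rw [norm_mul, norm_mul]
      have h : ‖(24:ℂ)‖ = 24 := by norm_num
      rw [h]
      have h1V : ‖1+V‖ ≤ 9.09 := by
        calc ‖1+V‖ ≤ ‖(1:ℂ)‖ + ‖V‖ := norm_add_le _ _
          _ ≤ 9.09 := by rw [norm_one]; linarith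
      have hm := mul_le_mul cS1 h1V (norm_nonneg _) (by positivity : (0:ℝ) ≤ 1.2*r)
      nlinarith [norm_nonneg S1, norm_nonneg (1+V)]
    calc ‖(1 - (t:ℂ))*V - 24*S1*(1+V)‖ ≤ ‖(1 - (t:ℂ))*V‖ + ‖(24:ℂ)*S1*(1+V)‖ := norm_sub_le _ _
      _ ≤ 1881 * r := by nlinarith [hrpos.le]
  -- main identities
  have ID1 : Δ' τ = q * D := by
    rw [Δ', e4, e6, hS3, hS5, hD_def, hG_def]; ring
  set M : ℂ := (1 - (t:ℂ)) + ((1 - (t:ℂ))*(D⁻¹ - 1) + W*D⁻¹) with hM_def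
  clear_value M
  have ID2 : χstar τ = M / q := by
    have key := chi_aux q S1 S3 S5 T3 T5 D V W M t (E2 τ) (E4 τ) (E6 τ)
      hqne hDne hS3 hS5 e2 e4 e6 hV_def hW_def hM_def
    unfold χstar χ' ξ'
    rw [ID1, ← ht_def]
    exact key
  -- final estimate
  have cM : ‖M‖ ≤ 1 + 26000 * r := by
    rw [hM_def]
    have p1 : ‖(1 - (t:ℂ))*(D⁻¹-1)‖ ≤ 2300*r := by
      rw [norm_mul]
      have hm := mul_le_mul c1t cR (norm_nonneg _) (by norm_num : (0:ℝ) ≤ 1)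
      linarith
    have p2 : ‖W*D⁻¹‖ ≤ 1881*r*12.5 := by
      rw [norm_mul]
      have hm := mul_le_mul cW cDinv (norm_nonneg _) (by positivity : (0:ℝ) ≤ 1881*r)
      linarith
    calc ‖(1 - (t:ℂ)) + ((1 - (t:ℂ))*(D⁻¹ - 1) + W*D⁻¹)‖ ≤ ‖(1:ℂ) - (t:ℂ)‖ + ‖(1 - (t:ℂ))*(D⁻¹ - 1) + W*D⁻¹‖ := norm_add_le _ _
      _ ≤ 1 + (‖(1 - (t:ℂ))*(D⁻¹-1)‖ + ‖W*D⁻¹‖) := by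
          linarith [norm_add_le ((1 - (t:ℂ))*(D⁻¹ - 1)) (W*D⁻¹)]
      _ ≤ 1 + 26000 * r := by nlinarith [hrpos.le]
  calc ‖(χstar τ)‖ = ‖M‖ / r := by
        rw [ID2, ← nr (M/q), norm_div, hrn]
      _ ≤ (1 + 26000*r)/r := by gcongr
      _ = r⁻¹ + 26000 := by field_simp [hrpos.ne']
      _ ≤ Real.exp (2*Real.pi*τ.im) + 82999 := by
          rw [hrinv]; linarith
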